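/- Let n ≥ 3 be an integer and 0 < ε < 1/12. Let f be a function defined on a subset of ℝⁿ containing {0, e₁, e₂, e₃} with f(0) = 0, satisfying |‖f(x) − f(y)‖ − ‖x − y‖| ≤ ε for all x, y ∈ {0, e₁, e₂, e₃}, and suppose f(e₁) = (e′₁₁, 0, …, 0), f(e₂) = (e′₂₁, e′₂₂, 0, …, 0), f(e₃) = (e′₃₁, e′₃₂, e′₃₃, 0, …, 0) with e′₁₁ ≥ 0, e′₂₂ ≥ 0, e′₃₃ ≥ 0. Then |e′₃₁| ≤ 4·ε, |e′₃₂| ≤ 6·ε, and 1 − 4·ε ≤ e′₃₃ ≤ 1 + ε. -/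

import Mathlib

set_option maxHeartbeats 1000000

theorem inner3_aux (n : ℕ) (hn : 2 < n) (x y : EuclideanSpace ℝ (Fin n))
    (hx : ∀ j : Fin n, j ≠ ⟨0, by omega⟩ → j ≠ ⟨1, by omega⟩ → j ≠ ⟨2, by omega⟩ → x j = 0) :
    inner ℝ x y = x ⟨0, by omega⟩ * y ⟨0, by omega⟩ + x ⟨1, by omega⟩ * y ⟨1, by omega⟩
      + x ⟨2, by omega⟩ * y ⟨2, by omega⟩ := by
  have h01 : (⟨0, by omega⟩ : Fin n) ≠ ⟨1, by omega⟩ := by simp [Fin.ext_iff]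
  have h02 : (⟨0, by omega⟩ : Fin n) ≠ ⟨2, by omega⟩ := by simp [Fin.ext_iff]
  have h12 : (⟨1, by omega⟩ : Fin n) ≠ ⟨2, by omega⟩ := by simp [Fin.ext_iff]
  rw [PiLp.inner_apply]
  rw [← Finset.sum_subset (Finset.subset_univ
      ({⟨0, by omega⟩, ⟨1, by omega⟩, ⟨2, by omega⟩} : Finset (Fin n)))
    (fun j _ hj => by
      simp only [Finset.mem_insert, Finset.mem_singleton, not_or] at hj
      simp only [RCLike.inner_apply, conj_trivial, mul_eq_zero]
      exact Or.inr (hx j hj.1 hj.2.1 hj.2.2))]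
  rw [Finset.sum_insert (by simp [h01, h02]), Finset.sum_insert (by simp [h12]),
    Finset.sum_singleton]
  simp [RCLike.inner_apply]; ring

theorem sqb_aux (x t e : ℝ) (hx : 0 ≤ x) (h : |x - t| ≤ e) (ht : 0 ≤ t - e) :
    (t - e) ^ 2 ≤ x ^ 2 ∧ x ^ 2 ≤ (t + e) ^ 2 := by
  rw [abs_le] at h
  constructor
  · nlinarith only [h.1, h.2, hx, ht]
  · nlinarith only [h.1, h.2, hx, ht]

theorem key_arith (ε s α b0 b1 c0 c1 c2 : ℝ)
    (hε0 : 0 < ε) (hε : ε < 1 / 12)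
    (hs2 : s ^ 2 = 2) (hs1 : (1.4:ℝ) ≤ s) (hsu : s ≤ 1.5)
    (hα1 : 1 - ε ≤ α) (hα2 : α ≤ 1 + ε)
    (hb1nn : 0 ≤ b1) (hc2nn : 0 ≤ c2)
    (qB1 : (1 - ε) ^ 2 ≤ b0 ^ 2 + b1 ^ 2) (qB2 : b0 ^ 2 + b1 ^ 2 ≤ (1 + ε) ^ 2)
    (qC1 : (1 - ε) ^ 2 ≤ c0 ^ 2 + c1 ^ 2 + c2 ^ 2)
    (qC2 : c0 ^ 2 + c1 ^ 2 + c2 ^ 2 ≤ (1 + ε) ^ 2)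
    (qAB1 : (s - ε) ^ 2 ≤ α ^ 2 - 2 * (α * b0) + (b0 ^ 2 + b1 ^ 2))
    (qAB2 : α ^ 2 - 2 * (α * b0) + (b0 ^ 2 + b1 ^ 2) ≤ (s + ε) ^ 2)
    (qAC1 : (s - ε) ^ 2 ≤ α ^ 2 - 2 * (α * c0) + (c0 ^ 2 + c1 ^ 2 + c2 ^ 2))
    (qAC2 : α ^ 2 - 2 * (α * c0) + (c0 ^ 2 + c1 ^ 2 + c2 ^ 2) ≤ (s + ε) ^ 2)
    (qBC1 : (s - ε) ^ 2 ≤ (b0 ^ 2 + b1 ^ 2) - 2 * (b0 * c0 + b1 * c1)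
        + (c0 ^ 2 + c1 ^ 2 + c2 ^ 2))
    (qBC2 : (b0 ^ 2 + b1 ^ 2) - 2 * (b0 * c0 + b1 * c1)
        + (c0 ^ 2 + c1 ^ 2 + c2 ^ 2) ≤ (s + ε) ^ 2) :
    |c0| ≤ 4 * ε ∧ |c1| ≤ 6 * ε ∧ 1 - 4 * ε ≤ c2 ∧ c2 ≤ 1 + ε := by
  have hαsqU : α ^ 2 ≤ (1 + ε) ^ 2 := by nlinarith only [hα1, hα2, hε0, hε]
  have hαsqL : (1 - ε) ^ 2 ≤ α ^ 2 := by nlinarith only [hα1, hε0, hε]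
  have hUb : 2 * (α * b0) ≤ 7 * ε + ε ^ 2 := by
    nlinarith only [qAB1, hαsqU, qB2, hs2, hsu, hs1, hε0, hε]
  have hLb : -(7 * ε) ≤ 2 * (α * b0) := by
    nlinarith only [qAB2, hαsqL, qB1, hs2, hsu, hs1, hε0, hε]
  have hb0U : b0 ≤ 4 * ε := by nlinarith only [hUb, hα1, hε0, hε]
  have hb0L : -(4 * ε) ≤ b0 := by nlinarith only [hLb, hα1, hε0, hε]
  have hUc : 2 * (α * c0) ≤ 7 * ε + ε ^ 2 := by
    nlinarith only [qAC1, hαsqU, qC2, hs2, hsu, hs1, hε0, hε]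
  have hLc : -(7 * ε) ≤ 2 * (α * c0) := by
    nlinarith only [qAC2, hαsqL, qC1, hs2, hsu, hs1, hε0, hε]
  have hc0U : c0 ≤ 4 * ε := by nlinarith only [hUc, hα1, hε0, hε]
  have hc0L : -(4 * ε) ≤ c0 := by nlinarith only [hLc, hα1, hε0, hε]
  have hb0sq : b0 ^ 2 ≤ 16 * ε ^ 2 := by nlinarith only [hb0U, hb0L, hε0]
  have hc0sq : c0 ^ 2 ≤ 16 * ε ^ 2 := by nlinarith only [hc0U, hc0L, hε0]
  have hb1sq : 1 - 2 * ε - 15 * ε ^ 2 ≤ b1 ^ 2 := by nlinarith only [qB1, hb0sq]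
  have hbcU : 2 * (b0 * c0 + b1 * c1) ≤ 7 * ε + ε ^ 2 := by
    nlinarith only [qBC1, qB2, qC2, hs2, hsu, hs1, hε0, hε]
  have hbcL : -(7 * ε) ≤ 2 * (b0 * c0 + b1 * c1) := by
    nlinarith only [qBC2, qB1, qC1, hs2, hsu, hs1, hε0, hε]
  have hb0c0U : b0 * c0 ≤ 16 * ε ^ 2 := by
    nlinarith only [hb0U, hb0L, hc0U, hc0L, hε0]
  have hb0c0L : -(16 * ε ^ 2) ≤ b0 * c0 := by
    nlinarith only [hb0U, hb0L, hc0U, hc0L, hε0]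
  have hUc1 : 2 * (b1 * c1) ≤ 7 * ε + 33 * ε ^ 2 := by nlinarith only [hbcU, hb0c0L]
  have hLc1 : 2 * (b1 * (-c1)) ≤ 7 * ε + 33 * ε ^ 2 := by nlinarith only [hbcL, hb0c0U]
  have key : ∀ x : ℝ, 2 * (b1 * x) ≤ 7 * ε + 33 * ε ^ 2 → x ≤ 6 * ε := by
    intro x hx
    by_contra hcon
    push_neg at hcon
    have h1 : 12 * (ε * b1) ≤ 7 * ε + 33 * ε ^ 2 := by
      nlinarith only [hx, hb1nn, hcon, hε0]
    have h2 : 12 * b1 ≤ 7 + 33 * ε := by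
      by_contra h2
      push_neg at h2
      nlinarith only [h1, h2, hε0]
    nlinarith only [h2, hb1sq, hb1nn, hε, hε0]
  have hc1U : c1 ≤ 6 * ε := key c1 hUc1
  have hc1L : -c1 ≤ 6 * ε := key (-c1) hLc1
  have hc1sq : c1 ^ 2 ≤ 36 * ε ^ 2 := by nlinarith only [hc1U, hc1L, hε0]
  have hc2sq : 1 - 2 * ε - 51 * ε ^ 2 ≤ c2 ^ 2 := by
    nlinarith only [qC1, hc0sq, hc1sq]
  refine ⟨abs_le.2 ⟨hc0L, hc0U⟩, abs_le.2 ⟨by linarith only [hc1L], hc1U⟩, ?_, ?_⟩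
  · by_contra hcon
    push_neg at hcon
    nlinarith only [hc2sq, hc2nn, hε0, hε, hcon]
  · nlinarith only [qC2, hc2nn, hε0, sq_nonneg c0, sq_nonneg c1]

/-- If `f 0 = 0`, `f` is an `ε`-isometry on `{0, e₁, e₂, e₃}` (`0 < ε < 1/12`)
with triangular form `f e₁ = (e′₁₁, 0, …)`, `f e₂ = (e′₂₁, e′₂₂, 0, …)`,
`f e₃ = (e′₃₁, e′₃₂, e′₃₃, 0, …)` and nonnegative diagonal entries, then
`|e′₃₁| ≤ 4ε`, `|e′₃₂| ≤ 6ε` and `1 − 4ε ≤ e′₃₃ ≤ 1 + ε`. -/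
theorem third_row_bounds (n : ℕ) (hn : 3 ≤ n) (ε : ℝ)
    (hε0 : 0 < ε) (hε : ε < 1 / 12)
    (f : EuclideanSpace ℝ (Fin n) → EuclideanSpace ℝ (Fin n))
    (hf0 : f 0 = 0)
    (hiso : ∀ x ∈ ({0, EuclideanSpace.single ⟨0, by omega⟩ (1 : ℝ),
              EuclideanSpace.single ⟨1, by omega⟩ (1 : ℝ),
              EuclideanSpace.single ⟨2, by omega⟩ (1 : ℝ)} :
              Set (EuclideanSpace ℝ (Fin n))),
            ∀ y ∈ ({0, EuclideanSpace.single ⟨0, by omega⟩ (1 : ℝ),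
              EuclideanSpace.single ⟨1, by omega⟩ (1 : ℝ),
              EuclideanSpace.single ⟨2, by omega⟩ (1 : ℝ)} :
              Set (EuclideanSpace ℝ (Fin n))),
            |‖f x - f y‖ - ‖x - y‖| ≤ ε)
    (htri1 : ∀ j : Fin n, j ≠ ⟨0, by omega⟩ →
      f (EuclideanSpace.single ⟨0, by omega⟩ (1 : ℝ)) j = 0)
    (htri2 : ∀ j : Fin n, j ≠ ⟨0, by omega⟩ → j ≠ ⟨1, by omega⟩ →
      f (EuclideanSpace.single ⟨1, by omega⟩ (1 : ℝ)) j = 0)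
    (htri3 : ∀ j : Fin n, j ≠ ⟨0, by omega⟩ → j ≠ ⟨1, by omega⟩ → j ≠ ⟨2, by omega⟩ →
      f (EuclideanSpace.single ⟨2, by omega⟩ (1 : ℝ)) j = 0)
    (hpos1 : 0 ≤ f (EuclideanSpace.single ⟨0, by omega⟩ (1 : ℝ)) ⟨0, by omega⟩)
    (hpos2 : 0 ≤ f (EuclideanSpace.single ⟨1, by omega⟩ (1 : ℝ)) ⟨1, by omega⟩)
    (hpos3 : 0 ≤ f (EuclideanSpace.single ⟨2, by omega⟩ (1 : ℝ)) ⟨2, by omega⟩) :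
    |f (EuclideanSpace.single ⟨2, by omega⟩ (1 : ℝ)) ⟨0, by omega⟩| ≤ 4 * ε ∧
    |f (EuclideanSpace.single ⟨2, by omega⟩ (1 : ℝ)) ⟨1, by omega⟩| ≤ 6 * ε ∧
    1 - 4 * ε ≤ f (EuclideanSpace.single ⟨2, by omega⟩ (1 : ℝ)) ⟨2, by omega⟩ ∧
    f (EuclideanSpace.single ⟨2, by omega⟩ (1 : ℝ)) ⟨2, by omega⟩ ≤ 1 + ε := by
  have h01 : (⟨0, by omega⟩ : Fin n) ≠ ⟨1, by omega⟩ := by simp [Fin.ext_iff]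
  have h02 : (⟨0, by omega⟩ : Fin n) ≠ ⟨2, by omega⟩ := by simp [Fin.ext_iff]
  have h12 : (⟨1, by omega⟩ : Fin n) ≠ ⟨2, by omega⟩ := by simp [Fin.ext_iff]
  set u1 := EuclideanSpace.single (⟨0, by omega⟩ : Fin n) (1 : ℝ) with hu1
  set u2 := EuclideanSpace.single (⟨1, by omega⟩ : Fin n) (1 : ℝ) with hu2
  set u3 := EuclideanSpace.single (⟨2, by omega⟩ : Fin n) (1 : ℝ) with hu3
  set a := f u1 with ha
  set b := f u2 with hb
  set c := f u3 with hc
  have m0 : (0 : EuclideanSpace ℝ (Fin n)) ∈ ({0, u1, u2, u3} : Set (EuclideanSpace ℝ (Fin n))) := by simp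
  have m1 : u1 ∈ ({0, u1, u2, u3} : Set (EuclideanSpace ℝ (Fin n))) := by simp
  have m2 : u2 ∈ ({0, u1, u2, u3} : Set (EuclideanSpace ℝ (Fin n))) := by simp
  have m3 : u3 ∈ ({0, u1, u2, u3} : Set (EuclideanSpace ℝ (Fin n))) := by simp
  have n1 : ‖u1‖ = 1 := by rw [hu1, EuclideanSpace.norm_single]; norm_num
  have n2 : ‖u2‖ = 1 := by rw [hu2, EuclideanSpace.norm_single]; norm_num
  have n3 : ‖u3‖ = 1 := by rw [hu3, EuclideanSpace.norm_single]; norm_num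
  have s2 : Real.sqrt 2 ^ 2 = 2 := Real.sq_sqrt (by norm_num)
  have s2nn : 0 ≤ Real.sqrt 2 := Real.sqrt_nonneg 2
  have slb : (1.4 : ℝ) ≤ Real.sqrt 2 := by nlinarith only [s2, s2nn]
  have sub : Real.sqrt 2 ≤ 1.5 := by nlinarith only [s2, s2nn]
  have udist : ∀ (i j : Fin n), i ≠ j →
      ‖EuclideanSpace.single i (1:ℝ) - EuclideanSpace.single j (1:ℝ)‖ = Real.sqrt 2 := by
    intro i j hij
    have hsq : ‖EuclideanSpace.single i (1:ℝ) - EuclideanSpace.single j (1:ℝ)‖ ^ 2 = 2 := by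
      rw [norm_sub_sq_real, EuclideanSpace.norm_single, EuclideanSpace.norm_single,
        EuclideanSpace.inner_single_left]
      simp [EuclideanSpace.single_apply, hij]
      norm_num
    rw [← Real.sqrt_sq (norm_nonneg _), hsq]
  have d12 : ‖u1 - u2‖ = Real.sqrt 2 := udist _ _ h01
  have d13 : ‖u1 - u3‖ = Real.sqrt 2 := udist _ _ h02
  have d23 : ‖u2 - u3‖ = Real.sqrt 2 := udist _ _ h12
  have hA : |‖a‖ - 1| ≤ ε := by
    have := hiso u1 m1 0 m0; rwa [hf0, sub_zero, sub_zero, n1] at this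
  have hB : |‖b‖ - 1| ≤ ε := by
    have := hiso u2 m2 0 m0; rwa [hf0, sub_zero, sub_zero, n2] at this
  have hC : |‖c‖ - 1| ≤ ε := by
    have := hiso u3 m3 0 m0; rwa [hf0, sub_zero, sub_zero, n3] at this
  have hAB : |‖a - b‖ - Real.sqrt 2| ≤ ε := by
    have := hiso u1 m1 u2 m2; rwa [d12] at this
  have hAC : |‖a - c‖ - Real.sqrt 2| ≤ ε := by
    have := hiso u1 m1 u3 m3; rwa [d13] at this
  have hBC : |‖b - c‖ - Real.sqrt 2| ≤ ε := by
    have := hiso u2 m2 u3 m3; rwa [d23] at this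
  set α := a ⟨0, by omega⟩ with hαdef
  set b0 := b ⟨0, by omega⟩ with hb0def
  set b1 := b ⟨1, by omega⟩ with hb1def
  set c0 := c ⟨0, by omega⟩ with hc0def
  set c1 := c ⟨1, by omega⟩ with hc1def
  set c2 := c ⟨2, by omega⟩ with hc2def
  have ha1 : a ⟨1, by omega⟩ = 0 := htri1 _ h01.symm
  have ha2 : a ⟨2, by omega⟩ = 0 := htri1 _ h02.symm
  have hb2 : b ⟨2, by omega⟩ = 0 := htri2 _ h02.symm h12.symm
  have hza : ∀ j : Fin n, j ≠ ⟨0, by omega⟩ → j ≠ ⟨1, by omega⟩ → j ≠ ⟨2, by omega⟩ → a j = 0 :=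
    fun j hj _ _ => htri1 j hj
  have hzb : ∀ j : Fin n, j ≠ ⟨0, by omega⟩ → j ≠ ⟨1, by omega⟩ → j ≠ ⟨2, by omega⟩ → b j = 0 :=
    fun j hj hj' _ => htri2 j hj hj'
  have hzc : ∀ j : Fin n, j ≠ ⟨0, by omega⟩ → j ≠ ⟨1, by omega⟩ → j ≠ ⟨2, by omega⟩ → c j = 0 :=
    htri3
  have nA : ‖a‖ ^ 2 = α ^ 2 := by
    rw [← real_inner_self_eq_norm_sq, inner3_aux n hn a a hza, ha1, ha2]; ring
  have nB : ‖b‖ ^ 2 = b0 ^ 2 + b1 ^ 2 := by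
    rw [← real_inner_self_eq_norm_sq, inner3_aux n hn b b hzb, hb2]; ring
  have nC : ‖c‖ ^ 2 = c0 ^ 2 + c1 ^ 2 + c2 ^ 2 := by
    rw [← real_inner_self_eq_norm_sq, inner3_aux n hn c c hzc]; ring
  have iAB : (inner ℝ a b : ℝ) = α * b0 := by
    rw [inner3_aux n hn a b hza, ha1, ha2]; ring
  have iAC : (inner ℝ a c : ℝ) = α * c0 := by
    rw [inner3_aux n hn a c hza, ha1, ha2]; ring
  have iBC : (inner ℝ b c : ℝ) = b0 * c0 + b1 * c1 := by
    rw [inner3_aux n hn b c hzb, hb2]; ring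
  have eAB : ‖a - b‖ ^ 2 = α ^ 2 - 2 * (α * b0) + (b0 ^ 2 + b1 ^ 2) := by
    rw [norm_sub_sq_real, nA, nB, iAB]
  have eAC : ‖a - c‖ ^ 2 = α ^ 2 - 2 * (α * c0) + (c0 ^ 2 + c1 ^ 2 + c2 ^ 2) := by
    rw [norm_sub_sq_real, nA, nC, iAC]
  have eBC : ‖b - c‖ ^ 2 = (b0 ^ 2 + b1 ^ 2) - 2 * (b0 * c0 + b1 * c1)
      + (c0 ^ 2 + c1 ^ 2 + c2 ^ 2) := by
    rw [norm_sub_sq_real, nB, nC, iBC]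
  have hAeq : ‖a‖ = α := by
    rw [← Real.sqrt_sq (norm_nonneg a), nA, Real.sqrt_sq hpos1]
  rw [hAeq] at hA
  rw [abs_le] at hA
  have h1ε : (0:ℝ) ≤ 1 - ε := by linarith only [hε]
  have hsε : (0:ℝ) ≤ Real.sqrt 2 - ε := by linarith only [slb, hε, hε0]
  have qB := sqb_aux ‖b‖ 1 ε (norm_nonneg b) hB h1ε
  have qC := sqb_aux ‖c‖ 1 ε (norm_nonneg c) hC h1ε
  have qAB := sqb_aux ‖a - b‖ (Real.sqrt 2) ε (norm_nonneg _) hAB hsε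
  have qAC := sqb_aux ‖a - c‖ (Real.sqrt 2) ε (norm_nonneg _) hAC hsε
  have qBC := sqb_aux ‖b - c‖ (Real.sqrt 2) ε (norm_nonneg _) hBC hsε
  rw [nB] at qB
  rw [nC] at qC
  rw [eAB] at qAB
  rw [eAC] at qAC
  rw [eBC] at qBC
  have hα1 : 1 - ε ≤ α := by linarith only [hA.1]
  have hα2 : α ≤ 1 + ε := by linarith only [hA.2]
  exact key_arith ε (Real.sqrt 2) α b0 b1 c0 c1 c2 hε0 hε s2 slb sub hα1 hα2
    hpos2 hpos3 qB.1 qB.2 qC.1 qC.2 qAB.1 qAB.2 qAC.1 qAC.2 qBC.1 qBC.2
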